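/- Let E and F be real inner product spaces, let r be a positive integer, and let φ : Fin r → E and ψ : Fin r → F be families of vectors. Let M be the Gram matrix of φ in E and let S be the r×r matrix with entries S_{ij} = ⟨φ_j, φ_i⟩_E + ⟨ψ_j, ψ_i⟩_F, and assume S is positive definite. Then for every x ∈ ℝ^r, ‖Σ_{j=1}^r x_j φ_j‖_E ≤ √(‖M‖₂ · ‖S⁻¹‖₂) · (‖Σ_{j=1}^r x_j φ_j‖_E² + ‖Σ_{j=1}^r x_j ψ_j‖_F²)^{1/2}. -/

import Mathlib

open scoped Matrix RealInnerProductSpace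

/-- The spectral norm of a real `r × r` matrix: the operator norm of the matrix
acting on Euclidean space `ℝ^r` with the `ℓ²` norm. -/
noncomputable def matrixSpectralNorm {r : ℕ} (A : Matrix (Fin r) (Fin r) ℝ) : ℝ :=
  ‖Matrix.toEuclideanCLM (𝕜 := ℝ) A‖

/-- The Gram matrix of a family `φ : Fin r → E` in a real inner product space `E`:
the `r × r` real matrix with entries `M i j = ⟪φ j, φ i⟫`. -/
noncomputable def gramMatrix {E : Type*} [NormedAddCommGroup E] [InnerProductSpace ℝ E]
    {r : ℕ} (φ : Fin r → E) : Matrix (Fin r) (Fin r) ℝ :=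
  Matrix.of fun i j => ⟪φ j, φ i⟫

/-- The `H¹`-type Gram matrix of two families `φ : Fin r → E`, `ψ : Fin r → F`:
the `r × r` real matrix with entries `S i j = ⟪φ j, φ i⟫_E + ⟪ψ j, ψ i⟫_F`. -/
noncomputable def sobolevGramMatrix {E F : Type*}
    [NormedAddCommGroup E] [InnerProductSpace ℝ E]
    [NormedAddCommGroup F] [InnerProductSpace ℝ F]
    {r : ℕ} (φ : Fin r → E) (ψ : Fin r → F) : Matrix (Fin r) (Fin r) ℝ :=
  Matrix.of fun i j => ⟪φ j, φ i⟫ + ⟪ψ j, ψ i⟫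

lemma inner_equiv_symm {r : ℕ} (v w : Fin r → ℝ) :
    ⟪((WithLp.equiv 2 (Fin r → ℝ)).symm v : EuclideanSpace ℝ (Fin r)),
      (WithLp.equiv 2 (Fin r → ℝ)).symm w⟫ = v ⬝ᵥ w := by
  simp [PiLp.inner_apply, dotProduct, mul_comm]

lemma norm_equiv_symm_sq {r : ℕ} (v : Fin r → ℝ) :
    ‖((WithLp.equiv 2 (Fin r → ℝ)).symm v : EuclideanSpace ℝ (Fin r))‖ ^ 2 = v ⬝ᵥ v := by
  rw [← real_inner_self_eq_norm_sq, inner_equiv_symm]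

lemma dot_mulVec_le {r : ℕ} (A : Matrix (Fin r) (Fin r) ℝ) (v : Fin r → ℝ) :
    v ⬝ᵥ (A *ᵥ v) ≤ matrixSpectralNorm A * (v ⬝ᵥ v) := by
  set V : EuclideanSpace ℝ (Fin r) := (WithLp.equiv 2 (Fin r → ℝ)).symm v with hV
  have h1 : v ⬝ᵥ (A *ᵥ v) = ⟪V, Matrix.toEuclideanCLM (𝕜 := ℝ) A V⟫ := by
    rw [hV]; exact (inner_equiv_symm v (A *ᵥ v)).symm
  have h3 := real_inner_le_norm V (Matrix.toEuclideanCLM (𝕜 := ℝ) A V)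
  have h4 := (Matrix.toEuclideanCLM (𝕜 := ℝ) A).le_opNorm V
  have h5 : ‖V‖ ^ 2 = v ⬝ᵥ v := norm_equiv_symm_sq v
  have hc : matrixSpectralNorm A = ‖Matrix.toEuclideanCLM (𝕜 := ℝ) A‖ := rfl
  rw [hc, ← h5, h1]
  nlinarith [norm_nonneg V, norm_nonneg (Matrix.toEuclideanCLM (𝕜 := ℝ) A V),
    mul_le_mul_of_nonneg_left h4 (norm_nonneg V)]

lemma dot_gram {E : Type*} [NormedAddCommGroup E] [InnerProductSpace ℝ E]
    {r : ℕ} (φ : Fin r → E) (x : Fin r → ℝ) :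
    x ⬝ᵥ ((gramMatrix φ) *ᵥ x) = ‖∑ j, x j • φ j‖ ^ 2 := by
  rw [← real_inner_self_eq_norm_sq]
  simp only [sum_inner, inner_sum, real_inner_smul_left, real_inner_smul_right,
    dotProduct, Matrix.mulVec, gramMatrix, Matrix.of_apply, Finset.mul_sum]
  rw [Finset.sum_comm]
  exact Finset.sum_congr rfl fun i _ => Finset.sum_congr rfl fun j _ => by
    rw [real_inner_comm]; ring

lemma mulVec_dot {r : ℕ} (A : Matrix (Fin r) (Fin r) ℝ) (v w : Fin r → ℝ) :
    (A *ᵥ v) ⬝ᵥ w = v ⬝ᵥ (Aᵀ *ᵥ w) := by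
  rw [Matrix.dotProduct_mulVec, Matrix.vecMul_transpose]

open scoped MatrixOrder in
lemma key_inv_bound {r : ℕ} {S : Matrix (Fin r) (Fin r) ℝ} (hS : S.PosDef) (v : Fin r → ℝ) :
    v ⬝ᵥ v ≤ matrixSpectralNorm S⁻¹ * (v ⬝ᵥ (S *ᵥ v)) := by
  have hST : Sᵀ = S := by
    have := hS.isHermitian
    rwa [Matrix.IsHermitian, Matrix.conjTranspose_eq_transpose_of_trivial] at this
  have hSinv : (S⁻¹).PosDef := hS.inv
  set R : Matrix (Fin r) (Fin r) ℝ := CFC.sqrt S⁻¹ with hRdef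
  have hRR : R * R = S⁻¹ := CFC.sqrt_mul_sqrt_self _ hSinv.posSemidef.nonneg
  have hRT : Rᵀ = R := by
    have := (Matrix.nonneg_iff_posSemidef.mp (CFC.sqrt_nonneg S⁻¹)).isHermitian
    rwa [Matrix.IsHermitian, Matrix.conjTranspose_eq_transpose_of_trivial] at this
  have hdet : IsUnit S.det := hS.det_pos.ne'.isUnit
  have hinv1 : S⁻¹ * S = 1 := Matrix.nonsing_inv_mul S hdet
  have hinv2 : S * S⁻¹ = 1 := Matrix.mul_nonsing_inv S hdet
  set y : Fin r → ℝ := R *ᵥ v with hy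
  set z : Fin r → ℝ := R *ᵥ (S *ᵥ v) with hz
  have h0 : v ⬝ᵥ v = y ⬝ᵥ z := by
    rw [hy, hz, mulVec_dot, hRT, Matrix.mulVec_mulVec, Matrix.mulVec_mulVec, hRR, hinv1,
      Matrix.one_mulVec]
  have hyy : y ⬝ᵥ y = v ⬝ᵥ (S⁻¹ *ᵥ v) := by
    rw [hy, mulVec_dot, hRT, Matrix.mulVec_mulVec, hRR]
  have hzz : z ⬝ᵥ z = v ⬝ᵥ (S *ᵥ v) := by
    rw [hz, mulVec_dot, hRT, Matrix.mulVec_mulVec, Matrix.mulVec_mulVec, hRR, hinv1,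
      Matrix.one_mulVec, mulVec_dot, hST]
  set Y : EuclideanSpace ℝ (Fin r) := (WithLp.equiv 2 (Fin r → ℝ)).symm y with hY
  set Z : EuclideanSpace ℝ (Fin r) := (WithLp.equiv 2 (Fin r → ℝ)).symm z with hZ
  have hcs : y ⬝ᵥ z ≤ ‖Y‖ * ‖Z‖ := by
    rw [← inner_equiv_symm y z]; exact real_inner_le_norm Y Z
  have hYsq : ‖Y‖ ^ 2 ≤ matrixSpectralNorm S⁻¹ * (v ⬝ᵥ v) := by
    rw [norm_equiv_symm_sq, hyy]; exact dot_mulVec_le S⁻¹ v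
  have hZsq : ‖Z‖ ^ 2 = v ⬝ᵥ (S *ᵥ v) := by rw [norm_equiv_symm_sq, hzz]
  have ha : 0 ≤ v ⬝ᵥ v := by
    rw [← norm_equiv_symm_sq v]; positivity
  have hb : 0 ≤ v ⬝ᵥ (S *ᵥ v) := by rw [← hZsq]; positivity
  have hcn : 0 ≤ matrixSpectralNorm S⁻¹ := norm_nonneg _
  rcases eq_or_lt_of_le ha with heq | hlt
  · rw [← heq]; positivity
  · nlinarith [norm_nonneg Y, norm_nonneg Z, sq_nonneg (‖Y‖ * ‖Z‖)]

/-- POD inverse estimate: if `M` is the Gram matrix of `φ` in `E` and `S` the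
(positive definite) matrix `S i j = ⟪φ j, φ i⟫ + ⟪ψ j, ψ i⟫`, then for every `x ∈ ℝ^r`,
`‖∑ x j • φ j‖ ≤ √(‖M‖₂ ‖S⁻¹‖₂) (‖∑ x j • φ j‖² + ‖∑ x j • ψ j‖²)^(1/2)`. -/
theorem pod_inverse_estimate_L2_le_H1
    {E F : Type*} [NormedAddCommGroup E] [InnerProductSpace ℝ E]
    [NormedAddCommGroup F] [InnerProductSpace ℝ F]
    (r : ℕ) (hr : 0 < r) (φ : Fin r → E) (ψ : Fin r → F)
    (hSpos : (sobolevGramMatrix φ ψ).PosDef) :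
    ∀ x : Fin r → ℝ,
      ‖∑ j, x j • φ j‖ ≤
        Real.sqrt (matrixSpectralNorm (gramMatrix φ) * matrixSpectralNorm (sobolevGramMatrix φ ψ)⁻¹) *
          Real.sqrt (‖∑ j, x j • φ j‖ ^ 2 + ‖∑ j, x j • ψ j‖ ^ 2) := by
  intro x
  have hSsum : sobolevGramMatrix φ ψ = gramMatrix φ + gramMatrix ψ := by
    ext i j; simp [sobolevGramMatrix, gramMatrix]
  have hM := dot_gram φ x
  have hPsi := dot_gram ψ x
  have hSdot : x ⬝ᵥ (sobolevGramMatrix φ ψ *ᵥ x) =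
      ‖∑ j, x j • φ j‖ ^ 2 + ‖∑ j, x j • ψ j‖ ^ 2 := by
    rw [hSsum, Matrix.add_mulVec, dotProduct_add, hM, hPsi]
  have h1 : ‖∑ j, x j • φ j‖ ^ 2 ≤ matrixSpectralNorm (gramMatrix φ) * (x ⬝ᵥ x) :=
    hM ▸ dot_mulVec_le _ x
  have h2 := key_inv_bound hSpos x
  rw [hSdot] at h2
  have hMnn : 0 ≤ matrixSpectralNorm (gramMatrix φ) := by unfold matrixSpectralNorm; positivity
  have hCnn : 0 ≤ matrixSpectralNorm (sobolevGramMatrix φ ψ)⁻¹ := by unfold matrixSpectralNorm; positivity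
  have hxx : 0 ≤ x ⬝ᵥ x := by rw [← norm_equiv_symm_sq x]; positivity
  rw [← Real.sqrt_mul (by positivity)]
  conv_lhs => rw [← Real.sqrt_sq (norm_nonneg (∑ j, x j • φ j))]
  apply Real.sqrt_le_sqrt
  nlinarith
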